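/- Let κ ∈ ℤ. If κ ≥ 2, then 𝐛β_{κ−1,1}(r) ∼ 2r² log r as r → 0⁺ (i.e. lim_{r→0⁺} 𝐛β_{κ−1,1}(r)/(r² log r) = 2). If κ < 2, then 𝐛β_{κ−1,1}(r) ∼ ((2−κ)/2)·r⁴ as r → 0⁺ (i.e. lim_{r→0⁺} 𝐛β_{κ−1,1}(r)/r⁴ = (2−κ)/2). -/

import Mathlib

open MeasureTheory Filter intervalIntegral

/-- The generalized binomial coefficient `C(x, n) = x(x−1)⋯(x−n+1)/n!` for `x ∈ ℤ`. -/
noncomputable def genBinom (x : ℤ) (n : ℕ) : ℝ :=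
  (∏ j ∈ Finset.range n, ((x : ℝ) - (j : ℝ))) / (n.factorial : ℝ)

/-- `β(w; a, b) := −Σ'_{n≠−b} ((−1)ⁿ/(n+b)) C(a−1,n) (1−w)^{n+b}
  − (−1)^b 𝟙[a ≥ 1 ∧ 0 ≤ −b < a] log(1−w)`. -/
noncomputable def betaFn (w : ℝ) (a b : ℤ) : ℝ :=
  -(∑' n : ℕ, if (n : ℤ) = -b then 0
      else ((-1 : ℝ) ^ n / ((n : ℝ) + (b : ℝ))) * genBinom (a - 1) n * (1 - w) ^ ((n : ℤ) + b))
    - (-1 : ℝ) ^ b * (if 1 ≤ a ∧ 0 ≤ -b ∧ -b < a then (1 : ℝ) else 0) * Real.log (1 - w)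

/-- `𝐛β_{a,b}(r) := −2 ∫₀^r t^{2b−1} (1−t²)^{−a−1} β(1−t²; a, 1−b) dt`. -/
noncomputable def bbeta (a b : ℤ) (r : ℝ) : ℝ :=
  -2 * ∫ t in (0 : ℝ)..r, t ^ (2 * b - 1) * (1 - t ^ 2) ^ (-a - 1) * betaFn (1 - t ^ 2) a (1 - b)

noncomputable def uCoef (κ : ℤ) (n : ℕ) : ℝ := (-1) ^ n / (n : ℝ) * genBinom (κ - 2) n

noncomputable def hFn (κ : ℤ) (x : ℝ) : ℝ := ∑' n : ℕ, uCoef κ (n + 1) * x ^ n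

lemma genBinom_succ (x : ℤ) (n : ℕ) :
    genBinom x (n + 1) = genBinom x n * ((x : ℝ) - n) / (n + 1) := by
  unfold genBinom
  rw [Finset.prod_range_succ, Nat.factorial_succ, Nat.cast_mul, Nat.cast_add, Nat.cast_one]
  rw [div_mul_eq_mul_div, div_div, mul_comm ((n:ℝ) + 1) (n.factorial : ℝ)]

lemma abs_uCoef (κ : ℤ) (n : ℕ) : |uCoef κ n| = |genBinom (κ - 2) n| / n := by
  unfold uCoef
  rw [abs_mul, abs_div, abs_pow, abs_neg, abs_one, one_pow, Nat.abs_cast]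
  ring

lemma summable_bound (κ : ℤ) :
    Summable (fun n : ℕ => |uCoef κ (n + 1)| * (3 / 4) ^ n) := by
  apply summable_of_ratio_norm_eventually_le (r := 7/8) (by norm_num)
  filter_upwards [eventually_ge_atTop (6 * κ.natAbs + 4)] with n hn
  have hn' : (6 * (κ.natAbs : ℝ) + 4) ≤ n := by exact_mod_cast hn
  set M : ℝ := (κ.natAbs : ℝ) with hM
  have hM0 : (0:ℝ) ≤ M := by positivity
  have hMeq : |(κ : ℝ)| = M := by rw [hM]; push_cast [Nat.cast_natAbs]; rfl
  have hyp2 : ((n:ℝ) + 2) ≠ 0 := by positivity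
  have hA : |((κ:ℝ) - 2) - ((n:ℝ) + 1)| ≤ M + n + 3 := by
    rw [abs_le]
    push_cast
    constructor <;> nlinarith [neg_abs_le (κ:ℝ), le_abs_self (κ:ℝ)]
  set A : ℝ := |((κ:ℝ) - 2) - ((n:ℝ) + 1)| with hAdef
  have hA0 : (0:ℝ) ≤ A := abs_nonneg _
  have hG : |genBinom (κ - 2) (n + 1 + 1)| = |genBinom (κ - 2) (n + 1)| * A / ((n:ℝ) + 2) := by
    rw [genBinom_succ (κ - 2) (n + 1), abs_div, abs_mul]
    have h1 : |((n:ℝ) + 1) + 1| = (n:ℝ) + 2 := by rw [abs_of_pos (by positivity)]; ring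
    push_cast at h1 ⊢
    rw [h1]
  have hfn1 : |uCoef κ (n + 1 + 1)| * (3 / 4) ^ (n + 1)
      = (|genBinom (κ - 2) (n + 1)| * (3/4)^n)
        * (A * (3/4) / (((n:ℝ) + 2) * ((n:ℝ) + 2))) := by
    rw [abs_uCoef, hG]
    push_cast
    rw [pow_succ]
    field_simp
    ring
  have hfn0 : |uCoef κ (n + 1)| * (3 / 4) ^ n
      = (|genBinom (κ - 2) (n + 1)| * (3/4)^n) / ((n:ℝ) + 1) := by
    rw [abs_uCoef]; push_cast; ring
  have hkey : A * (3/4) / (((n:ℝ) + 2) * ((n:ℝ) + 2)) ≤ (7/8) / ((n:ℝ) + 1) := by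
    rw [div_le_div_iff₀ (by positivity) (by positivity)]
    nlinarith [mul_le_mul_of_nonneg_right hA (by positivity : (0:ℝ) ≤ (n:ℝ) + 1),
      mul_nonneg (by linarith : (0:ℝ) ≤ (n:ℝ) - (6*M+4)) (by positivity : (0:ℝ) ≤ (n:ℝ))]
  have hpos : (0:ℝ) ≤ |genBinom (κ - 2) (n + 1)| * (3/4)^n := by positivity
  have hnorm : ∀ m : ℕ, ‖|uCoef κ (m + 1)| * (3/4:ℝ) ^ m‖ = |uCoef κ (m + 1)| * (3/4:ℝ) ^ m :=
    fun m => Real.norm_of_nonneg (by positivity)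
  rw [hnorm, hnorm]
  calc |uCoef κ (n + 1 + 1)| * (3 / 4) ^ (n + 1)
      = (|genBinom (κ - 2) (n + 1)| * (3/4)^n)
        * (A * (3/4) / (((n:ℝ) + 2) * ((n:ℝ) + 2))) := hfn1
    _ ≤ (|genBinom (κ - 2) (n + 1)| * (3/4)^n) * ((7/8) / ((n:ℝ) + 1)) :=
        mul_le_mul_of_nonneg_left hkey hpos
    _ = 7/8 * (|uCoef κ (n + 1)| * (3 / 4) ^ n) := by rw [hfn0]; ring

lemma summable_pt (κ : ℤ) {x : ℝ} (hx : |x| ≤ 3 / 4) :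
    Summable (fun n : ℕ => uCoef κ (n + 1) * x ^ n) := by
  apply Summable.of_norm_bounded (summable_bound κ)
  intro n
  rw [Real.norm_eq_abs, abs_mul, abs_pow]
  exact mul_le_mul_of_nonneg_left (pow_le_pow_left₀ (abs_nonneg x) hx n) (abs_nonneg _)

lemma hFn_contOn (κ : ℤ) : ContinuousOn (hFn κ) (Set.Ioo (-(3/4) : ℝ) (3/4)) := by
  apply continuousOn_tsum (u := fun n : ℕ => |uCoef κ (n + 1)| * (3 / 4) ^ n)
    (fun n => (continuous_const.mul (continuous_pow n)).continuousOn) (summable_bound κ)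
  intro n x hx
  rw [Real.norm_eq_abs]; simp only [Pi.mul_apply]; rw [abs_mul, abs_pow]
  have hx' : |x| ≤ 3/4 := (abs_lt.2 ⟨hx.1, hx.2⟩).le
  exact mul_le_mul_of_nonneg_left (pow_le_pow_left₀ (abs_nonneg x) hx' n) (abs_nonneg _)

lemma hFn_zero (κ : ℤ) : hFn κ 0 = 2 - (κ : ℝ) := by
  unfold hFn
  rw [tsum_eq_single 0 (fun n hn => by simp [zero_pow hn])]
  simp [uCoef, genBinom]

noncomputable def cInd (κ : ℤ) : ℝ := if 2 ≤ κ then 1 else 0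

lemma betaFn_eq (κ : ℤ) {t : ℝ} (ht : |t| ≤ 1/2) :
    betaFn (1 - t^2) (κ-1) (1-1) = -(t^2 * hFn κ (t^2)) - cInd κ * Real.log (t^2) := by
  have hx2 : |t^2| ≤ 3/4 := by
    rw [abs_of_nonneg (sq_nonneg t)]
    nlinarith [abs_nonneg t, sq_abs t]
  have hind : ((1 ≤ κ - 1 ∧ 0 ≤ -(1-1) ∧ -(1-1) < κ - 1) ↔ 2 ≤ κ) := by omega
  unfold betaFn
  have h1 : (1:ℝ) - (1 - t^2) = t^2 := by ring
  rw [h1]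
  have hcind : (-1:ℝ) ^ (1-1 : ℤ) * (if 1 ≤ κ-1 ∧ 0 ≤ -(1-1) ∧ -(1-1) < κ-1 then (1:ℝ) else 0)
      = cInd κ := by
    rw [show (1-1:ℤ) = 0 from rfl, zpow_zero, one_mul, cInd]
    exact if_congr (by omega) rfl rfl
  rw [hcind]
  congr 1
  have hfun : (fun n : ℕ => if (n : ℤ) = -(1-1) then (0:ℝ)
      else ((-1 : ℝ) ^ n / ((n : ℝ) + ((1-1 : ℤ) : ℝ))) * genBinom (κ - 1 - 1) n
        * (t^2) ^ ((n : ℤ) + (1-1)))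
      = fun n : ℕ => uCoef κ n * (t^2) ^ n := by
    funext n
    simp only [show (1-1:ℤ) = 0 from rfl, neg_zero, add_zero, Int.cast_zero, zpow_natCast,
      Nat.cast_eq_zero, show κ-1-1 = κ-2 from by ring]
    rcases n with _ | m
    · simp [uCoef]
    · rw [if_neg (Nat.succ_ne_zero m)]
      simp [uCoef]
  rw [hfun]
  have hs1 : Summable (fun n : ℕ => uCoef κ (n + 1) * (t^2) ^ n) := summable_pt κ hx2
  have hs2 : Summable (fun n : ℕ => uCoef κ n * (t^2) ^ n) := by
    rw [← summable_nat_add_iff 1]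
    apply (hs1.mul_right (t^2)).congr
    intro n
    rw [pow_succ]
    ring
  rw [Summable.tsum_eq_zero_add hs2]
  have h0 : uCoef κ 0 * (t^2) ^ 0 = 0 := by simp [uCoef]
  rw [h0, zero_add]
  have hshift : ∀ n : ℕ, uCoef κ (n+1) * (t^2) ^ (n+1) = (uCoef κ (n+1) * (t^2) ^ n) * t^2 := by
    intro n; rw [pow_succ]; ring
  rw [tsum_congr hshift, tsum_mul_right]
  rw [hFn]
  ring

noncomputable def qFn (κ : ℤ) (t : ℝ) : ℝ := (max (1 - t^2) 2⁻¹) ^ (-κ)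

noncomputable def HFn (κ : ℤ) (t : ℝ) : ℝ := hFn κ (min (t^2) 4⁻¹)

noncomputable def Phi (κ : ℤ) (t : ℝ) : ℝ :=
  -(t^3 * qFn κ t * HFn κ t) - cInd κ * (qFn κ t * (2 * (t * Real.log t)))

lemma qFn_cont (κ : ℤ) : Continuous (qFn κ) := by
  apply Continuous.zpow₀ (Continuous.max (by continuity) continuous_const) (-κ)
  intro x
  left
  have : (0:ℝ) < 2⁻¹ := by norm_num
  exact ne_of_gt (lt_of_lt_of_le this (le_max_right _ _))

lemma HFn_cont (κ : ℤ) : Continuous (HFn κ) := by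
  apply (hFn_contOn κ).comp_continuous (Continuous.min (by continuity) continuous_const)
  intro x
  constructor
  · have : (0:ℝ) ≤ min (x^2) 4⁻¹ := le_min (sq_nonneg x) (by norm_num)
    linarith
  · exact lt_of_le_of_lt (min_le_right _ _) (by norm_num)

lemma Phi_cont (κ : ℤ) : Continuous (Phi κ) := by
  unfold Phi
  exact (((continuous_pow 3).mul (qFn_cont κ)).mul (HFn_cont κ)).neg.sub
    (continuous_const.mul ((qFn_cont κ).mul
      (continuous_const.mul Real.continuous_mul_log)))

lemma qFn_zero (κ : ℤ) : qFn κ 0 = 1 := by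
  unfold qFn
  norm_num

lemma HFn_zero (κ : ℤ) : HFn κ 0 = 2 - (κ:ℝ) := by
  unfold HFn
  norm_num [hFn_zero]

lemma integrand_eq (κ : ℤ) {t : ℝ} (ht : t ∈ Set.Icc (0:ℝ) (1/2)) :
    t ^ (2*1-1 : ℤ) * (1 - t^2) ^ (-(κ-1)-1) * betaFn (1 - t^2) (κ-1) (1-1) = Phi κ t := by
  obtain ⟨h0, h1⟩ := ht
  have habs : |t| ≤ 1/2 := by rw [abs_of_nonneg h0]; exact h1
  rw [betaFn_eq κ habs]
  have e1 : (2*1-1 : ℤ) = 1 := by norm_num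
  have e2 : (-(κ-1)-1 : ℤ) = -κ := by ring
  rw [e1, e2, zpow_one]
  have ht2 : t^2 ≤ 4⁻¹ := by nlinarith
  have e3 : qFn κ t = (1 - t^2) ^ (-κ) := by
    rw [qFn, max_eq_left (by nlinarith : (2⁻¹:ℝ) ≤ 1 - t^2)]
  have e4 : HFn κ t = hFn κ (t^2) := by rw [HFn, min_eq_left ht2]
  have e5 : Real.log (t^2) = 2 * Real.log t := by
    rw [Real.log_pow]; norm_num
  rw [Phi, e3, e4, e5]
  ring

lemma bbeta_eq (κ : ℤ) {r : ℝ} (hr : r ∈ Set.Icc (0:ℝ) (1/2)) :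
    bbeta (κ-1) 1 r = -2 * ∫ t in (0:ℝ)..r, Phi κ t := by
  rw [bbeta]
  congr 1
  apply intervalIntegral.integral_congr
  intro t ht
  rw [Set.uIcc_of_le hr.1] at ht
  exact integrand_eq κ ⟨ht.1, le_trans ht.2 hr.2⟩

lemma bbeta_hasDeriv (κ : ℤ) {x : ℝ} (hx : x ∈ Set.Ioo (0:ℝ) (1/2)) :
    HasDerivAt (bbeta (κ-1) 1) (-2 * Phi κ x) x := by
  have hc := Phi_cont κ
  have h1 : HasDerivAt (fun r => ∫ t in (0:ℝ)..r, Phi κ t) (Phi κ x) x :=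
    intervalIntegral.integral_hasDerivAt_right (hc.intervalIntegrable 0 x)
      (hc.stronglyMeasurableAtFilter _ _) hc.continuousAt
  have h2 := h1.const_mul (-2 : ℝ)
  apply h2.congr_of_eventuallyEq
  filter_upwards [Ioo_mem_nhds hx.1 hx.2] with r hr
  exact bbeta_eq κ ⟨hr.1.le, hr.2.le⟩

lemma bbeta_tendsto_zero (κ : ℤ) : Tendsto (bbeta (κ-1) 1) (nhdsWithin 0 (Set.Ioi 0)) (nhds 0) := by
  have hc := Phi_cont κ
  have h1 : Continuous (fun r : ℝ => -2 * ∫ t in (0:ℝ)..r, Phi κ t) :=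
    continuous_const.mul (intervalIntegral.continuous_primitive
      (fun a b => hc.intervalIntegrable a b) 0)
  have h2 : Tendsto (fun r : ℝ => -2 * ∫ t in (0:ℝ)..r, Phi κ t)
      (nhdsWithin 0 (Set.Ioi 0)) (nhds 0) := by
    have h3 := h1.tendsto 0
    simp only [intervalIntegral.integral_same, mul_zero] at h3
    exact h3.mono_left nhdsWithin_le_nhds
  apply Filter.Tendsto.congr' _ h2
  filter_upwards [Ioo_mem_nhdsGT_of_mem (by norm_num : (0:ℝ) ∈ Set.Ico (0:ℝ) (1/2))] with r hr
  exact (bbeta_eq κ ⟨hr.1.le, hr.2.le⟩).symm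

lemma qFn_tendsto (κ : ℤ) : Tendsto (qFn κ) (nhdsWithin 0 (Set.Ioi 0)) (nhds 1) := by
  have := (qFn_cont κ).tendsto 0
  rw [qFn_zero] at this
  exact this.mono_left nhdsWithin_le_nhds

lemma HFn_tendsto (κ : ℤ) : Tendsto (HFn κ) (nhdsWithin 0 (Set.Ioi 0)) (nhds (2 - (κ:ℝ))) := by
  have := (HFn_cont κ).tendsto 0
  rw [HFn_zero] at this
  exact this.mono_left nhdsWithin_le_nhds

lemma log_inv_tendsto : Tendsto (fun x : ℝ => (Real.log x)⁻¹) (nhdsWithin 0 (Set.Ioi 0)) (nhds 0) := by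
  have h1 : Tendsto (fun x : ℝ => -Real.log x) (nhdsWithin 0 (Set.Ioi 0)) atTop :=
    tendsto_neg_atBot_atTop.comp Real.tendsto_log_nhdsGT_zero
  have h3 := h1.inv_tendsto_atTop.neg
  norm_num at h3
  apply h3.congr
  intro x
  rfl

/-- Corollary 5.5, case `m = −1`: if `κ ≥ 2` then `𝐛β_{κ−1,1}(r) ∼ 2r² log r`
as `r → 0⁺`, and if `κ < 2` then `𝐛β_{κ−1,1}(r) ∼ ((2−κ)/2) r⁴` as `r → 0⁺`. -/
theorem bbeta_asymp_neg_one (κ : ℤ) :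
    (2 ≤ κ → Tendsto (fun r : ℝ => bbeta (κ - 1) 1 r / (r ^ 2 * Real.log r))
      (nhdsWithin 0 (Set.Ioi 0)) (nhds 2)) ∧
    (κ < 2 → Tendsto (fun r : ℝ => bbeta (κ - 1) 1 r / r ^ 4)
      (nhdsWithin 0 (Set.Ioi 0)) (nhds ((2 - (κ : ℝ)) / 2))) := by
  constructor
  · intro hκ
    have hcInd : cInd κ = 1 := if_pos hκ
    have hgg' : ∀ x ∈ Set.Ioo (0:ℝ) (1/2),
        HasDerivAt (fun r : ℝ => r^2 * Real.log r) (2*x*Real.log x + x) x := by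
      intro x hx
      have hx0 : x ≠ 0 := ne_of_gt hx.1
      have h1 : HasDerivAt (fun r : ℝ => r^2) (2*x) x := by simpa using hasDerivAt_pow 2 x
      have h2 : HasDerivAt Real.log x⁻¹ x := Real.hasDerivAt_log hx0
      have h3 : HasDerivAt (fun r : ℝ => r^2 * Real.log r) (2*x*Real.log x + x^2 * x⁻¹) x :=
        h1.mul h2
      convert h3 using 1
      simp only [pow_two, mul_assoc, mul_inv_cancel₀ hx0]
      ring
    have hlog : ∀ x ∈ Set.Ioo (0:ℝ) (1/2), Real.log x < -(1/2) := by
      intro x hx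
      have h1 : Real.log x < Real.log (1/2) := Real.log_lt_log hx.1 hx.2
      have h2 : Real.log (1/2) = -Real.log 2 := by rw [one_div, Real.log_inv]
      nlinarith [Real.log_two_gt_d9]
    have hg' : ∀ x ∈ Set.Ioo (0:ℝ) (1/2), 2*x*Real.log x + x ≠ 0 := by
      intro x hx
      have h1 := hlog x hx
      have : 2*x*Real.log x + x = x * (2*Real.log x + 1) := by ring
      rw [this]
      exact mul_ne_zero (ne_of_gt hx.1) (by nlinarith)
    have hga : Tendsto (fun r : ℝ => r^2 * Real.log r) (nhdsWithin 0 (Set.Ioi 0)) (nhds 0) := by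
      have h1 : Continuous (fun r : ℝ => r * (r * Real.log r)) :=
        continuous_id.mul Real.continuous_mul_log
      have h2 := h1.tendsto 0
      norm_num at h2
      have h3 : (fun r : ℝ => r^2 * Real.log r) = fun r => r * (r * Real.log r) := by
        funext r; ring
      rw [h3]
      exact h2.mono_left nhdsWithin_le_nhds
    have hinv := log_inv_tendsto
    have hdiv : Tendsto (fun x : ℝ => (-2 * Phi κ x) / (2*x*Real.log x + x))
        (nhdsWithin 0 (Set.Ioi 0)) (nhds 2) := by
      have t1 : Tendsto (fun x : ℝ => 2*x^2) (nhdsWithin 0 (Set.Ioi 0)) (nhds 0) := by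
        have := (continuous_const.mul (continuous_pow 2) : Continuous fun x : ℝ => 2*x^2).tendsto (0:ℝ)
        norm_num at this
        exact this.mono_left nhdsWithin_le_nhds
      have hN : Tendsto (fun x : ℝ => 2*x^2*qFn κ x*HFn κ x*(Real.log x)⁻¹ + 4*qFn κ x)
          (nhdsWithin 0 (Set.Ioi 0)) (nhds 4) := by
        have := (((t1.mul (qFn_tendsto κ)).mul (HFn_tendsto κ)).mul hinv).add
          ((qFn_tendsto κ).const_mul 4)
        norm_num at this
        exact this
      have hD : Tendsto (fun x : ℝ => 2 + (Real.log x)⁻¹)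
          (nhdsWithin 0 (Set.Ioi 0)) (nhds 2) := by
        have := (tendsto_const_nhds (x := (2:ℝ)) (f := nhdsWithin (0:ℝ) (Set.Ioi 0))).add hinv
        norm_num at this
        exact this
      have hND := hN.div hD (by norm_num)
      norm_num at hND
      apply Filter.Tendsto.congr' _ hND
      filter_upwards [Ioo_mem_nhdsGT_of_mem (by norm_num : (0:ℝ) ∈ Set.Ico (0:ℝ) (1/2))] with x hx
      have hx0 : x ≠ 0 := ne_of_gt hx.1
      have hl2 := hlog x hx
      have hl0 : Real.log x ≠ 0 := by nlinarith
      have hD0 : (2 : ℝ) + (Real.log x)⁻¹ ≠ 0 := by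
        have hinv0 := inv_mul_cancel₀ hl0
        nlinarith [hinv0]
      have hden0 := hg' x hx
      simp only [Pi.div_apply]
      rw [div_eq_div_iff hD0 hden0]
      simp only [Phi, hcInd]
      field_simp
      ring
    exact HasDerivAt.lhopital_zero_right_on_Ioo (by norm_num : (0:ℝ) < 1/2)
      (fun x hx => bbeta_hasDeriv κ hx) hgg' hg' (bbeta_tendsto_zero κ) hga hdiv
  · intro hκ
    have hcInd : cInd κ = 0 := if_neg (not_le.2 hκ)
    have hgg' : ∀ x ∈ Set.Ioo (0:ℝ) (1/2),
        HasDerivAt (fun r : ℝ => r^4) (4*x^3) x := by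
      intro x _
      simpa using hasDerivAt_pow 4 x
    have hg' : ∀ x ∈ Set.Ioo (0:ℝ) (1/2), 4*x^3 ≠ 0 := by
      intro x hx
      have := hx.1
      positivity
    have hga : Tendsto (fun r : ℝ => r^4) (nhdsWithin 0 (Set.Ioi 0)) (nhds 0) := by
      have := (continuous_pow 4).tendsto (0:ℝ)
      norm_num at this
      exact this.mono_left nhdsWithin_le_nhds
    have hdiv : Tendsto (fun x : ℝ => (-2 * Phi κ x) / (4*x^3))
        (nhdsWithin 0 (Set.Ioi 0)) (nhds ((2 - (κ:ℝ))/2)) := by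
      have h1 : Tendsto (fun x : ℝ => qFn κ x * HFn κ x / 2)
          (nhdsWithin 0 (Set.Ioi 0)) (nhds ((2 - (κ:ℝ))/2)) := by
        have := ((qFn_tendsto κ).mul (HFn_tendsto κ)).div_const 2
        rw [one_mul] at this
        exact this
      apply Filter.Tendsto.congr' _ h1
      filter_upwards [Ioo_mem_nhdsGT_of_mem (by norm_num : (0:ℝ) ∈ Set.Ico (0:ℝ) (1/2))] with x hx
      have hx0 : x ≠ 0 := ne_of_gt hx.1
      simp only [Phi, hcInd, zero_mul, sub_zero]
      field_simp
      ring
    exact HasDerivAt.lhopital_zero_right_on_Ioo (by norm_num : (0:ℝ) < 1/2)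
      (fun x hx => bbeta_hasDeriv κ hx) hgg' hg' (bbeta_tendsto_zero κ) hga hdiv
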